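/- Let Γ₁ and Γ₂ be discrete, cocompact, torsion-free subgroups of SL(2,ℝ) whose orbits of the basepoint coincide: Γ₁•o = Γ₂•o. Then Γ₁ and Γ₂ are commensurable: the subgroup Γ₁ ∩ Γ₂ has finite index in both Γ₁ and Γ₂. -/

import Mathlib

noncomputable section

open UpperHalfPlane MeasureTheory Topology Filter Metric Set Pointwise

local notation "SL2R" => Matrix.SpecialLinearGroup (Fin 2) ℝ

/-- The matrix topology on `SL(2,ℝ)`, induced from the space of `2 × 2` real matrices. -/
instance : TopologicalSpace SL2R :=
  TopologicalSpace.induced (fun g => (g : Matrix (Fin 2) (Fin 2) ℝ)) inferInstance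

/-- The basepoint `o = i` of the upper half-plane. -/
def o : ℍ := UpperHalfPlane.I

/-- A subgroup of `SL(2,ℝ)` is cocompact if the translates of some compact set cover `ℍ`. -/
def IsCocompact (Γ : Subgroup SL2R) : Prop :=
  ∃ K : Set ℍ, IsCompact K ∧ ⋃ γ : Γ, (γ : SL2R) • K = Set.univ

/-- The orbit `Λ = Γ • o` of the basepoint. -/
def orbitO (Γ : Subgroup SL2R) : Set ℍ := {z : ℍ | ∃ γ ∈ Γ, γ • o = z}

/-- The focal counting function `υ(z) = #{λ ∈ Λ | λ ≠ o, d(z,λ) = d(z,o)}`. -/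
def upsilon (Γ : Subgroup SL2R) (z : ℍ) : ℕ :=
  {l : ℍ | l ∈ orbitO Γ ∧ l ≠ o ∧ dist z l = dist z o}.ncard

/-- The Brillouin index `B(z) = #{λ ∈ Λ | d(z,λ) ≤ d(z,o)}`. -/
def brillouinIndex (Γ : Subgroup SL2R) (z : ℍ) : ℕ :=
  {l : ℍ | l ∈ orbitO Γ ∧ dist z l ≤ dist z o}.ncard

/-- The `k`-th Brillouin set `B_k = {z | B(z) = k}`. -/
def brillouinSet (Γ : Subgroup SL2R) (k : ℕ) : Set ℍ := {z : ℍ | brillouinIndex Γ z = k}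

/-- The perpendicular bisector `L_λ = {z | d(z,o) = d(z,λ)}`. -/
def bisector (l : ℍ) : Set ℍ := {z : ℍ | dist z o = dist z l}

/-- A monoid is torsion-free if its only element of finite order is the identity
(the definition `Monoid.IsTorsionFree` of the older Mathlib, since removed). -/
def Monoid.IsTorsionFree (G : Type*) [Monoid G] : Prop :=
  ∀ g : G, g ≠ 1 → ¬IsOfFinOrder g

namespace CommAux

local notation "Mat" => Matrix (Fin 2) (Fin 2) ℝ

lemma continuous_coeMatrix : Continuous (fun g : SL2R => (g : Mat)) :=
  continuous_induced_dom

lemma isInducing_coeMatrix : IsInducing (fun g : SL2R => (g : Mat)) := ⟨rfl⟩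

lemma injective_coeMatrix : Function.Injective (fun g : SL2R => (g : Mat)) :=
  fun _ _ h => Subtype.ext h

instance : T2Space SL2R :=
  (IsEmbedding.mk isInducing_coeMatrix injective_coeMatrix).t2Space

instance : IsTopologicalGroup SL2R where
  continuous_mul := by
    apply continuous_induced_rng.2
    have : ((fun g : SL2R => (g : Mat)) ∘ fun p : SL2R × SL2R => p.1 * p.2)
        = fun p : SL2R × SL2R => (p.1 : Mat) * (p.2 : Mat) := by
      funext p; exact Matrix.SpecialLinearGroup.coe_mul _ _
    rw [this]
    exact (continuous_coeMatrix.comp continuous_fst).matrix_mul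
      (continuous_coeMatrix.comp continuous_snd)
  continuous_inv := by
    apply continuous_induced_rng.2
    have : ((fun g : SL2R => (g : Mat)) ∘ fun g : SL2R => g⁻¹)
        = fun g : SL2R => Matrix.adjugate (g : Mat) := by
      funext g; exact Matrix.SpecialLinearGroup.coe_inv g
    rw [this]
    exact continuous_coeMatrix.matrix_adjugate

lemma det_entries (g : SL2R) :
    (g : Mat) 0 0 * (g : Mat) 1 1 - (g : Mat) 0 1 * (g : Mat) 1 0 = 1 := by
  have h := g.prop
  rwa [Matrix.det_fin_two] at h

lemma denom_ne_zero' (g : SL2R) (z : ℍ) :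
    (((g : Mat) 1 0 : ℝ) : ℂ) * (z : ℂ) + (((g : Mat) 1 1 : ℝ) : ℂ) ≠ 0 := by
  have h := UpperHalfPlane.linear_ne_zero (cd := ![(g : Mat) 1 0, (g : Mat) 1 1]) z ?_
  · simpa using h
  · intro hc
    have h0 : (g : Mat) 1 0 = 0 := by simpa using congrFun hc 0
    have h1 : (g : Mat) 1 1 = 0 := by simpa using congrFun hc 1
    have hd := det_entries g
    rw [h0, h1] at hd
    simp at hd

lemma coe_smul' (g : SL2R) (z : ℍ) :
    ((g • z : ℍ) : ℂ) =
      ((((g : Mat) 0 0 : ℝ) : ℂ) * (z : ℂ) + (((g : Mat) 0 1 : ℝ) : ℂ)) /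
        ((((g : Mat) 1 0 : ℝ) : ℂ) * (z : ℂ) + (((g : Mat) 1 1 : ℝ) : ℂ)) := by
  rw [UpperHalfPlane.specialLinearGroup_apply]
  simp [UpperHalfPlane.coe_mk]

lemma smul_eqn (g : SL2R) (z : ℍ) :
    ((g • z : ℍ) : ℂ) * ((((g : Mat) 1 0 : ℝ) : ℂ) * (z : ℂ) + (((g : Mat) 1 1 : ℝ) : ℂ))
      = (((g : Mat) 0 0 : ℝ) : ℂ) * (z : ℂ) + (((g : Mat) 0 1 : ℝ) : ℂ) :=
  (eq_div_iff (denom_ne_zero' g z)).mp (coe_smul' g z)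

lemma continuous_smul_const (z : ℍ) : Continuous fun g : SL2R => g • z := by
  rw [UpperHalfPlane.isEmbedding_coe.continuous_iff]
  have : ((UpperHalfPlane.coe) ∘ fun g : SL2R => g • z)
      = fun g : SL2R =>
        ((((g : Mat) 0 0 : ℝ) : ℂ) * (z : ℂ) + (((g : Mat) 0 1 : ℝ) : ℂ)) /
          ((((g : Mat) 1 0 : ℝ) : ℂ) * (z : ℂ) + (((g : Mat) 1 1 : ℝ) : ℂ)) := by
    funext g; exact coe_smul' g z
  rw [this]
  rw [continuous_iff_continuousAt]
  intro g
  have hent : ∀ i j : Fin 2, Continuous fun g : SL2R => (((g : Mat) i j : ℝ) : ℂ) :=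
    fun i j => Complex.continuous_ofReal.comp (continuous_coeMatrix.matrix_elem i j)
  exact ContinuousAt.div
    (((hent 0 0).mul continuous_const).add (hent 0 1)).continuousAt
    (((hent 1 0).mul continuous_const).add (hent 1 1)).continuousAt
    (denom_ne_zero' g z)


lemma coe_o : (o : ℂ) = Complex.I := rfl

lemma im_o : o.im = 1 := rfl

lemma entry_bound4 {r : ℝ} (hr : 0 ≤ r) (g : SL2R) (hg : dist (g • o) o ≤ r) :
    |(g : Mat) 0 0| ≤ Real.sqrt (Real.exp r ^ 2 * Real.exp r) ∧
    |(g : Mat) 0 1| ≤ Real.sqrt (Real.exp r ^ 2 * Real.exp r) ∧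
    |(g : Mat) 1 0| ≤ Real.sqrt (Real.exp r ^ 2 * Real.exp r) ∧
    |(g : Mat) 1 1| ≤ Real.sqrt (Real.exp r ^ 2 * Real.exp r) := by
  set z : ℍ := g • o with hzdef
  set a : ℝ := (g : Mat) 0 0
  set b : ℝ := (g : Mat) 0 1
  set c : ℝ := (g : Mat) 1 0
  set d : ℝ := (g : Mat) 1 1
  have hdet : a * d - b * c = 1 := det_entries g
  -- imaginary part bounds
  have him1 : z.im ≤ Real.exp r := by
    have h := UpperHalfPlane.im_le_im_mul_exp_dist z o
    rw [im_o, one_mul] at h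
    exact h.trans (Real.exp_le_exp.2 hg)
  have him2 : Real.exp (-r) ≤ z.im := by
    have h := UpperHalfPlane.im_le_im_mul_exp_dist o z
    rw [im_o, dist_comm] at h
    have h1 : Real.exp (dist z o) ≤ Real.exp r := Real.exp_le_exp.2 hg
    have h2 : Real.exp (-r) * Real.exp r = 1 := by rw [← Real.exp_add]; simp
    nlinarith [Real.exp_pos (-r), Real.exp_pos r, Real.exp_pos (dist z o), z.im_pos]
  -- modulus bound
  have habs : ‖(z : ℂ)‖ ≤ Real.exp r := by
    have h3 := UpperHalfPlane.dist_coe_le z o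
    rw [im_o, one_mul] at h3
    have h4 : dist (z : ℂ) (o : ℂ) ≤ Real.exp r - 1 := by
      have := Real.exp_le_exp.2 hg
      linarith
    have h5 : ‖(z : ℂ)‖ ≤ dist (z : ℂ) (o : ℂ) + ‖(o : ℂ)‖ := by
      rw [Complex.dist_eq]
      simpa using norm_add_le ((z : ℂ) - (o : ℂ)) (o : ℂ)
    have h6 : ‖(o : ℂ)‖ = 1 := by rw [coe_o]; simp
    rw [h6] at h5
    linarith
  -- the equation
  have heq := smul_eqn g o
  rw [← hzdef, coe_o] at heq
  have hRe := congrArg Complex.re heq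
  have hIm := congrArg Complex.im heq
  simp only [Complex.mul_re, Complex.mul_im, Complex.add_re, Complex.add_im,
    Complex.ofReal_re, Complex.ofReal_im, Complex.I_re, Complex.I_im] at hRe hIm
  set x : ℝ := (z : ℂ).re with hx
  set y : ℝ := (z : ℂ).im with hy
  have hyim : y = z.im := UpperHalfPlane.coe_im z
  have hb : b = x * d - y * c := by linarith [hRe]
  have ha : a = x * c + y * d := by linarith [hIm]
  have hy1 : y * (c ^ 2 + d ^ 2) = 1 := by linear_combination (-d) * ha + c * hb + hdet
  have hy2 : Real.exp (-r) ≤ y := hyim ▸ him2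
  have hy3 : y ≤ Real.exp r := hyim ▸ him1
  have hexp : Real.exp (-r) * Real.exp r = 1 := by rw [← Real.exp_add]; simp
  have hcd : c ^ 2 + d ^ 2 ≤ Real.exp r := by
    nlinarith [Real.exp_pos (-r), Real.exp_pos r, sq_nonneg c, sq_nonneg d]
  have hxy : x ^ 2 + y ^ 2 ≤ Real.exp r ^ 2 := by
    have h6 : Complex.normSq (z : ℂ) = x ^ 2 + y ^ 2 := by
      rw [Complex.normSq_apply]; ring
    have h7 := Complex.sq_norm (z : ℂ)
    nlinarith [norm_nonneg (z : ℂ), Real.exp_pos r]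
  have hab : a ^ 2 + b ^ 2 ≤ Real.exp r ^ 2 * Real.exp r := by
    have hid : a ^ 2 + b ^ 2 = (x ^ 2 + y ^ 2) * (c ^ 2 + d ^ 2) := by
      rw [ha, hb]; ring
    rw [hid]
    have h8 : (0:ℝ) ≤ x ^ 2 + y ^ 2 := by positivity
    have h9 : (0:ℝ) ≤ c ^ 2 + d ^ 2 := by positivity
    exact mul_le_mul hxy hcd h9 (by positivity)
  have hone : (1:ℝ) ≤ Real.exp r := Real.one_le_exp hr
  have key : ∀ t : ℝ, t ^ 2 ≤ Real.exp r ^ 2 * Real.exp r →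
      |t| ≤ Real.sqrt (Real.exp r ^ 2 * Real.exp r) := by
    intro t ht
    rw [← Real.sqrt_sq_eq_abs]
    exact Real.sqrt_le_sqrt ht
  have hE : Real.exp r ≤ Real.exp r ^ 2 * Real.exp r := by
    nlinarith [hone, Real.exp_pos r]
  have k1 : a ^ 2 ≤ Real.exp r ^ 2 * Real.exp r := by linarith [sq_nonneg b]
  have k2 : b ^ 2 ≤ Real.exp r ^ 2 * Real.exp r := by linarith [sq_nonneg a]
  have k3 : c ^ 2 ≤ Real.exp r ^ 2 * Real.exp r := by linarith [sq_nonneg d]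
  have k4 : d ^ 2 ≤ Real.exp r ^ 2 * Real.exp r := by linarith [sq_nonneg c]
  exact ⟨key a k1, key b k2, key c k3, key d k4⟩

lemma entry_bound {r : ℝ} (hr : 0 ≤ r) (g : SL2R) (hg : dist (g • o) o ≤ r) (i j : Fin 2) :
    |(g : Mat) i j| ≤ Real.sqrt (Real.exp r ^ 2 * Real.exp r) := by
  obtain ⟨h1, h2, h3, h4⟩ := entry_bound4 hr g hg
  fin_cases i <;> fin_cases j
  · exact h1
  · exact h2
  · exact h3
  · exact h4

lemma isCompact_C (r : ℝ) : IsCompact {g : SL2R | dist (g • o) o ≤ r} := by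
  rcases lt_or_ge r 0 with hr | hr
  · have : {g : SL2R | dist (g • o) o ≤ r} = ∅ := by
      ext g; simp only [Set.mem_setOf_eq, Set.mem_empty_iff_false, iff_false, not_le]
      exact lt_of_lt_of_le hr dist_nonneg
    rw [this]; exact isCompact_empty
  · set B := Real.sqrt (Real.exp r ^ 2 * Real.exp r) with hB
    have hclosed : IsClosed {g : SL2R | dist (g • o) o ≤ r} := by
      have : {g : SL2R | dist (g • o) o ≤ r}
          = (fun g : SL2R => g • o) ⁻¹' (Metric.closedBall o r) := by
        ext g; simp [Metric.mem_closedBall]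
      rw [this]
      exact Metric.isClosed_closedBall.preimage (continuous_smul_const o)
    have hKc : IsCompact (Set.univ.pi fun _ : Fin 2 =>
        (Set.univ.pi fun _ : Fin 2 => Set.Icc (-B) B) : Set Mat) :=
      isCompact_univ_pi fun _ => isCompact_univ_pi fun _ => isCompact_Icc
    have hrange : IsClosed (Set.range fun g : SL2R => (g : Mat)) := by
      have hre : (Set.range fun g : SL2R => (g : Mat)) = {A : Mat | A.det = 1} := by
        ext A
        constructor
        · rintro ⟨g, rfl⟩; exact g.prop
        · intro hA; exact ⟨⟨A, hA⟩, rfl⟩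
      rw [hre]
      exact IsClosed.preimage (continuous_id.matrix_det) isClosed_singleton
    have hpre : IsCompact ((fun g : SL2R => (g : Mat)) ⁻¹'
        (Set.univ.pi fun _ : Fin 2 => (Set.univ.pi fun _ : Fin 2 => Set.Icc (-B) B))) :=
      isInducing_coeMatrix.isCompact_preimage hrange hKc
    refine hpre.of_isClosed_subset hclosed ?_
    intro g hg
    change ∀ i ∈ Set.univ, ∀ j ∈ Set.univ, -B ≤ (g : Mat) i j ∧ (g : Mat) i j ≤ B
    intro i _ j _
    have := entry_bound hr g hg i j
    constructor <;> [linarith [neg_abs_le ((g : Mat) i j)]; linarith [le_abs_self ((g : Mat) i j)]]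


lemma orbit_inter_finite (Γ : Subgroup SL2R) (hd : DiscreteTopology Γ) (r : ℝ) :
    (orbitO Γ ∩ Metric.closedBall o r).Finite := by
  haveI := hd
  have hC : IsCompact {g : SL2R | dist (g • o) o ≤ r} := isCompact_C r
  have hΓclosed : IsClosed (Γ : Set SL2R) := Subgroup.isClosed_of_discrete
  have hK : IsCompact ((Γ : Set SL2R) ∩ {g : SL2R | dist (g • o) o ≤ r}) :=
    hC.inter_left hΓclosed
  haveI hdisc2 : DiscreteTopology
      (((Γ : Set SL2R) ∩ {g : SL2R | dist (g • o) o ≤ r} : Set SL2R)) :=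
    DiscreteTopology.of_subset hd Set.inter_subset_left
  have hfin : ((Γ : Set SL2R) ∩ {g : SL2R | dist (g • o) o ≤ r}).Finite :=
    hK.finite (isDiscrete_iff_discreteTopology.mpr hdisc2)
  apply Set.Finite.subset (hfin.image (fun g => g • o))
  rintro l ⟨⟨γ, hγ, rfl⟩, hball⟩
  exact ⟨γ, ⟨hγ, by simpa [Metric.mem_closedBall] using hball⟩, rfl⟩

lemma eq_one_or_neg_one_of_fixes {g : SL2R} {z w : ℍ} (hz : g • z = z) (hw : g • w = w)
    (hzw : z ≠ w) : (g : Mat) = 1 ∨ (g : Mat) = -1 := by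
  set a : ℝ := (g : Mat) 0 0 with ha
  set b : ℝ := (g : Mat) 0 1 with hb
  set c : ℝ := (g : Mat) 1 0 with hc
  set d : ℝ := (g : Mat) 1 1 with hd
  have hdet : a * d - b * c = 1 := det_entries g
  have hz' : (z : ℂ) * ((c : ℂ) * (z : ℂ) + (d : ℂ)) = (a : ℂ) * (z : ℂ) + (b : ℂ) := by
    have h := smul_eqn g z; rwa [hz] at h
  have hw' : (w : ℂ) * ((c : ℂ) * (w : ℂ) + (d : ℂ)) = (a : ℂ) * (w : ℂ) + (b : ℂ) := by
    have h := smul_eqn g w; rwa [hw] at h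
  have hsub : ((z : ℂ) - (w : ℂ)) * ((c : ℂ) * ((z : ℂ) + (w : ℂ)) + ((d : ℂ) - (a : ℂ))) = 0 := by
    linear_combination hz' - hw'
  have hzw' : (z : ℂ) - (w : ℂ) ≠ 0 :=
    sub_ne_zero.2 fun h => hzw (UpperHalfPlane.ext h)
  have hkey : (c : ℂ) * ((z : ℂ) + (w : ℂ)) + ((d : ℂ) - (a : ℂ)) = 0 :=
    (mul_eq_zero.mp hsub).resolve_left hzw'
  by_cases hc0 : c = 0
  · have hda : d = a := by
      rw [hc0] at hkey
      have : ((d : ℂ) - (a : ℂ)) = 0 := by simpa using hkey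
      exact_mod_cast sub_eq_zero.mp this
    have hb0 : b = 0 := by
      have h := hz'
      rw [hc0, hda] at h
      have : ((b : ℝ) : ℂ) = 0 := by push_cast at h ⊢; linear_combination -h
      exact_mod_cast this
    have ha1 : a * a = 1 := by rw [hb0, hda] at hdet; linarith
    rcases mul_self_eq_one_iff.mp ha1 with h1 | h1
    · left
      ext i j
      fin_cases i <;> fin_cases j <;>
        simp_all [Matrix.one_apply, ← ha, ← hb, ← hc, ← hd]
    · right
      ext i j
      fin_cases i <;> fin_cases j <;>
        simp_all [Matrix.one_apply, ← ha, ← hb, ← hc, ← hd]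
  · exfalso
    have h2 : (c : ℂ) * ((z : ℂ) + (w : ℂ)) = (a : ℂ) - (d : ℂ) := by
      linear_combination hkey
    have him := congrArg Complex.im h2
    simp only [Complex.mul_im, Complex.add_im, Complex.add_re, Complex.sub_im,
      Complex.ofReal_re, Complex.ofReal_im] at him
    have hz_im : 0 < (z : ℂ).im := z.im_pos
    have hw_im : 0 < (w : ℂ).im := w.im_pos
    have : c * ((z : ℂ).im + (w : ℂ).im) = 0 := by linarith [him]
    rcases mul_eq_zero.mp this with h | h
    · exact hc0 h
    · linarith

lemma fiber_finite (l : ℍ) (hlo : l ≠ o) (μ : ℍ) :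
    {g : SL2R | g • o = o ∧ g • l = μ}.Finite := by
  rcases Set.eq_empty_or_nonempty {g : SL2R | g • o = o ∧ g • l = μ} with h | ⟨g₀, hg₀o, hg₀l⟩
  · rw [h]; exact Set.finite_empty
  · have hsub : {g : SL2R | g • o = o ∧ g • l = μ} ⊆
        (fun g : SL2R => (g : Mat)) ⁻¹' {(g₀ : Mat) * 1, (g₀ : Mat) * (-1)} := by
      rintro g ⟨hgo, hgl⟩
      have h1 : (g₀⁻¹ * g) • o = o := by
        rw [mul_smul, hgo]
        exact inv_smul_eq_iff.mpr hg₀o.symm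
      have h2 : (g₀⁻¹ * g) • l = l := by
        rw [mul_smul, hgl, ← hg₀l, inv_smul_smul]
      have hgg : (g : Mat) = (g₀ : Mat) * ((g₀⁻¹ * g : SL2R) : Mat) := by
        rw [← Matrix.SpecialLinearGroup.coe_mul]
        congr 1
        rw [mul_inv_cancel_left]
      simp only [Set.mem_preimage, Set.mem_insert_iff, Set.mem_singleton_iff]
      rcases eq_one_or_neg_one_of_fixes h1 h2 (Ne.symm hlo) with hpm | hpm
      · left; rw [hgg, hpm]
      · right; rw [hgg, hpm]
    exact Set.Finite.subset
      (Set.Finite.preimage injective_coeMatrix.injOn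
        ((Set.finite_singleton _).insert _)) hsub

lemma stab_finite (Γ : Subgroup SL2R) (hd : DiscreteTopology Γ) (l : ℍ) (hlo : l ≠ o) :
    {g : SL2R | g • o = o ∧ g • l ∈ orbitO Γ}.Finite := by
  have hF := orbit_inter_finite Γ hd (dist l o)
  apply Set.Finite.subset (hF.biUnion fun μ _ => fiber_finite l hlo μ)
  rintro g ⟨hgo, hgl⟩
  have hdist : dist (g • l) o = dist l o := by
    conv_lhs => rw [← hgo]
    exact dist_smul g l o
  exact Set.mem_biUnion ⟨hgl, by simp [Metric.mem_closedBall, hdist]⟩ ⟨hgo, rfl⟩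

lemma relIndex_ne_zero (Γ₁ Γ₂ : Subgroup SL2R) (h₁disc : DiscreteTopology Γ₁)
    (horb : orbitO Γ₁ = orbitO Γ₂) (l : ℍ) (hl : l ∈ orbitO Γ₁) (hlo : l ≠ o) :
    (Γ₁ ⊓ Γ₂).relIndex Γ₂ ≠ 0 := by
  have hT : {g : SL2R | g • o = o ∧ g • l ∈ orbitO Γ₁}.Finite := stab_finite Γ₁ h₁disc l hlo
  have hch : ∀ γ : Γ₂, ∃ x : SL2R, x ∈ Γ₁ ∧ x • o = (γ : SL2R)⁻¹ • o := by
    intro γ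
    have hmem : (γ : SL2R)⁻¹ • o ∈ orbitO Γ₂ := ⟨(γ : SL2R)⁻¹, inv_mem γ.2, rfl⟩
    rw [← horb] at hmem
    obtain ⟨x, hx, hxo⟩ := hmem
    exact ⟨x, hx, hxo⟩
  choose c hc1 hc2 using hch
  obtain ⟨δ, hδ, hδo⟩ := hl
  have hfT : ∀ γ : Γ₂, (γ : SL2R) * c γ ∈ {g : SL2R | g • o = o ∧ g • l ∈ orbitO Γ₁} := by
    intro γ
    constructor
    · rw [mul_smul, hc2, smul_inv_smul]
    · have h1 : (c γ * δ) • o ∈ orbitO Γ₁ := ⟨c γ * δ, mul_mem (hc1 γ) hδ, rfl⟩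
      rw [horb] at h1
      obtain ⟨ε, hε, hεo⟩ := h1
      have h2 : ((γ : SL2R) * c γ) • l = ((γ : SL2R) * ε) • o := by
        rw [mul_smul, ← hδo, ← mul_smul (c γ) δ, ← hεo, ← mul_smul]
      rw [h2, horb]
      exact ⟨(γ : SL2R) * ε, mul_mem γ.2 hε, rfl⟩
  haveI hQfin : Finite (Γ₂ ⧸ (Γ₁ ⊓ Γ₂).subgroupOf Γ₂) := by
    haveI := hT.to_subtype
    apply Finite.of_injective
      (fun q : Γ₂ ⧸ (Γ₁ ⊓ Γ₂).subgroupOf Γ₂ =>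
        (⟨(q.out : SL2R) * c q.out, hfT q.out⟩ :
          {g : SL2R | g • o = o ∧ g • l ∈ orbitO Γ₁}))
    intro q q' hqq'
    have heq : (q.out : SL2R) * c q.out = (q'.out : SL2R) * c q'.out :=
      congrArg Subtype.val hqq'
    set x := q.out with hxdef
    set y := q'.out with hydef
    have h3 : (x : SL2R)⁻¹ * (y : SL2R) = c x * (c y)⁻¹ := by
      calc (x : SL2R)⁻¹ * y = (x : SL2R)⁻¹ * (((y : SL2R) * c y) * (c y)⁻¹) := by group
        _ = (x : SL2R)⁻¹ * (((x : SL2R) * c x) * (c y)⁻¹) := by rw [heq]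
        _ = c x * (c y)⁻¹ := by group
    have hmem : x⁻¹ * y ∈ (Γ₁ ⊓ Γ₂).subgroupOf Γ₂ := by
      rw [Subgroup.mem_subgroupOf, Subgroup.mem_inf]
      constructor
      · have : ((x⁻¹ * y : Γ₂) : SL2R) = c x * (c y)⁻¹ := by
          push_cast
          exact h3
        rw [this]
        exact mul_mem (hc1 x) (inv_mem (hc1 y))
      · exact SetLike.coe_mem _
    calc q = QuotientGroup.mk x := (QuotientGroup.out_eq' q).symm
      _ = QuotientGroup.mk y := QuotientGroup.eq.mpr hmem
      _ = q' := QuotientGroup.out_eq' q'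
  rw [Subgroup.relIndex]
  exact Subgroup.index_ne_zero_of_finite

lemma eq_bot_of_orbit_trivial (Γ : Subgroup SL2R) (hd : DiscreteTopology Γ)
    (htf : Monoid.IsTorsionFree Γ) (h : ∀ l ∈ orbitO Γ, l = o) : Γ = ⊥ := by
  haveI := hd
  have h0 : (Γ : Set SL2R) ⊆ {g : SL2R | dist (g • o) o ≤ 0} := by
    intro γ hγ
    have hmem : γ • o ∈ orbitO Γ := ⟨γ, hγ, rfl⟩
    simp [h _ hmem]
  have hK : IsCompact ((Γ : Set SL2R) ∩ {g : SL2R | dist (g • o) o ≤ 0}) :=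
    (isCompact_C 0).inter_left Subgroup.isClosed_of_discrete
  haveI hdisc2 : DiscreteTopology
      (((Γ : Set SL2R) ∩ {g : SL2R | dist (g • o) o ≤ 0} : Set SL2R)) :=
    DiscreteTopology.of_subset hd Set.inter_subset_left
  have hfin : ((Γ : Set SL2R)).Finite :=
    (hK.finite (isDiscrete_iff_discreteTopology.mpr hdisc2)).subset (Set.subset_inter Set.Subset.rfl h0)
  haveI : Finite Γ := hfin.to_subtype
  rw [Subgroup.eq_bot_iff_forall]
  intro x hx
  by_contra hx1
  exact htf ⟨x, hx⟩ (by simpa [Subtype.ext_iff] using hx1) (isOfFinOrder_of_finite (⟨x, hx⟩ : Γ))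

end CommAux


/-- Discrete cocompact torsion-free subgroups of `SL(2,ℝ)` with the same orbit of the
basepoint are commensurable. -/
theorem commensurable_of_orbit_eq
    (Γ₁ Γ₂ : Subgroup SL2R)
    (h₁disc : DiscreteTopology Γ₁) (h₂disc : DiscreteTopology Γ₂)
    (h₁cc : IsCocompact Γ₁) (h₂cc : IsCocompact Γ₂)
    (h₁tf : Monoid.IsTorsionFree Γ₁) (h₂tf : Monoid.IsTorsionFree Γ₂)
    (horb : orbitO Γ₁ = orbitO Γ₂) :
    (Γ₁ ⊓ Γ₂).relIndex Γ₁ ≠ 0 ∧ (Γ₁ ⊓ Γ₂).relIndex Γ₂ ≠ 0 := by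
  classical
  by_cases hdeg : ∃ l ∈ orbitO Γ₁, l ≠ o
  · obtain ⟨l, hl, hlo⟩ := hdeg
    constructor
    · have h := CommAux.relIndex_ne_zero Γ₂ Γ₁ h₂disc horb.symm l
        (by rw [← horb]; exact hl) hlo
      rwa [inf_comm] at h
    · exact CommAux.relIndex_ne_zero Γ₁ Γ₂ h₁disc horb l hl hlo
  · push_neg at hdeg
    have h1 : Γ₁ = ⊥ := CommAux.eq_bot_of_orbit_trivial Γ₁ h₁disc h₁tf hdeg
    have h2 : Γ₂ = ⊥ := CommAux.eq_bot_of_orbit_trivial Γ₂ h₂disc h₂tf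
      (fun l hl => hdeg l (by rw [horb]; exact hl))
    rw [h1, h2, inf_idem]
    exact ⟨by simp [Subgroup.relIndex_self], by simp [Subgroup.relIndex_self]⟩
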